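/- If two hyperbolic elements g, h of a Fuchsian group Γ share exactly one fixed point on ∂ℍ, then Γ is not discrete. Equivalently, in a discrete subgroup of PSL(2,ℝ), two hyperbolic elements either share both fixed points (and hence have a common axis) or share none. -/

import Mathlib

open UpperHalfPlane OnePoint Matrix
open scoped MatrixGroups

/-- Topology on `SL(2, ℝ)`, induced from the space of matrices. -/
instance : TopologicalSpace SL(2, ℝ) :=
  TopologicalSpace.induced (fun A : SL(2, ℝ) => (A : Matrix (Fin 2) (Fin 2) ℝ))
    inferInstance

/-- The Möbius action of `A ∈ SL(2, ℝ)` on the boundary circle `∂ℍ = ℝ ∪ {∞}`. -/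
noncomputable def boundaryMoebius (A : SL(2, ℝ)) : OnePoint ℝ → OnePoint ℝ :=
  fun x =>
    Option.elim x
      (if A.1 1 0 = 0 then (∞ : OnePoint ℝ) else ((A.1 0 0 / A.1 1 0 : ℝ) : OnePoint ℝ))
      (fun r =>
        if A.1 1 0 * r + A.1 1 1 = 0 then (∞ : OnePoint ℝ)
        else (((A.1 0 0 * r + A.1 0 1) / (A.1 1 0 * r + A.1 1 1) : ℝ) : OnePoint ℝ))

/-- The set of fixed points of `A ∈ SL(2, ℝ)` on the boundary circle `∂ℍ`. -/
noncomputable def boundaryFix (A : SL(2, ℝ)) : Set (OnePoint ℝ) :=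
  {x | boundaryMoebius A x = x}

lemma bm_coe (A : SL(2,ℝ)) (r : ℝ) : boundaryMoebius A (r : OnePoint ℝ) =
    if A.1 1 0 * r + A.1 1 1 = 0 then (∞ : OnePoint ℝ)
    else (((A.1 0 0 * r + A.1 0 1) / (A.1 1 0 * r + A.1 1 1) : ℝ) : OnePoint ℝ) := rfl

lemma bm_infty (A : SL(2,ℝ)) : boundaryMoebius A ∞ =
    (if A.1 1 0 = 0 then (∞ : OnePoint ℝ) else ((A.1 0 0 / A.1 1 0 : ℝ) : OnePoint ℝ)) := rfl

lemma sl_det (A : SL(2,ℝ)) : A.1 0 0 * A.1 1 1 - A.1 0 1 * A.1 1 0 = 1 := by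
  have := A.2
  rw [Matrix.det_fin_two] at this
  linarith

lemma mul_entry (A B : SL(2,ℝ)) (i j : Fin 2) :
    (A * B).1 i j = A.1 i 0 * B.1 0 j + A.1 i 1 * B.1 1 j := by
  show (A.1 * B.1) i j = _
  rw [Matrix.mul_apply, Fin.sum_univ_two]

lemma inv_entries (A : SL(2,ℝ)) :
    (A⁻¹).1 = !![A.1 1 1, -A.1 0 1; -A.1 1 0, A.1 0 0] := by
  rw [Matrix.SpecialLinearGroup.SL2_inv_expl]
  ext i j
  fin_cases i <;> fin_cases j <;> rfl

lemma boundaryMoebius_one : boundaryMoebius (1 : SL(2,ℝ)) = id := by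
  funext x
  cases x with
  | infty => simp [bm_infty]
  | coe r =>
    show boundaryMoebius 1 (r : OnePoint ℝ) = _
    rw [bm_coe]
    simp

lemma coe_inv_coe (M : SL(2,ℝ)) : (M⁻¹).1 * M.1 = 1 := by
  rw [← Matrix.SpecialLinearGroup.coe_mul]
  simp

lemma conj_trace (M g : SL(2,ℝ)) :
    (M*g*M⁻¹).1 0 0 + (M*g*M⁻¹).1 1 1 = g.1 0 0 + g.1 1 1 := by
  have h1 : ((M*g*M⁻¹ : SL(2,ℝ)) : Matrix (Fin 2) (Fin 2) ℝ) = M.1 * (g.1 * (M⁻¹).1) := by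
    rw [Matrix.SpecialLinearGroup.coe_mul, Matrix.SpecialLinearGroup.coe_mul, mul_assoc]
  have h2 : Matrix.trace ((M*g*M⁻¹ : SL(2,ℝ)) : Matrix (Fin 2) (Fin 2) ℝ)
      = Matrix.trace (g.1 : Matrix (Fin 2) (Fin 2) ℝ) := by
    rw [h1, Matrix.trace_mul_comm, mul_assoc, coe_inv_coe, mul_one]
  rw [Matrix.trace_fin_two, Matrix.trace_fin_two] at h2
  exact h2

lemma conj_lower_left (g : SL(2,ℝ)) (r : ℝ)
    (hfix : boundaryMoebius g (r : OnePoint ℝ) = (r : OnePoint ℝ))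
    (M : SL(2,ℝ)) (hM : M.1 = !![0,-1;1,-r]) : (M*g*M⁻¹).1 1 0 = 0 := by
  rw [bm_coe] at hfix
  by_cases hu : g.1 1 0 * r + g.1 1 1 = 0
  · rw [if_pos hu] at hfix
    exact absurd hfix.symm (OnePoint.coe_ne_infty r)
  · rw [if_neg hu] at hfix
    rw [OnePoint.coe_eq_coe, div_eq_iff hu] at hfix
    have hMinv : (M⁻¹).1 = !![-r,1;-1,0] := by
      rw [inv_entries, hM]
      norm_num
    rw [mul_entry, mul_entry, mul_entry, hM, hMinv]
    simp
    linear_combination -hfix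

lemma sq_ne_one (a a' : ℝ) (haa' : a * a' = 1) (htr : 2 < |a + a'|) : a^2 ≠ 1 := by
  intro h1
  have h2 : a = 1 ∨ a = -1 := by
    have h0 : (a - 1) * (a + 1) = 0 := by linear_combination h1
    rcases mul_eq_zero.mp h0 with h | h
    · left; linarith
    · right; linarith
  rcases h2 with h | h <;> subst h
  · have h3 : a' = 1 := by linarith
    rw [h3] at htr
    norm_num at htr
  · have h3 : a' = -1 := by linarith
    rw [h3] at htr
    norm_num at htr

lemma boundaryMoebius_mul (A B : SL(2,ℝ)) (x : OnePoint ℝ) :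
    boundaryMoebius (A * B) x = boundaryMoebius A (boundaryMoebius B x) := by
  have hdB := sl_det B
  cases x with
  | infty =>
    rw [bm_infty, bm_infty]
    by_cases hB : B.1 1 0 = 0
    · have hB00 : B.1 0 0 ≠ 0 := by
        intro h0; rw [h0, hB] at hdB; simp at hdB
      rw [if_pos hB, bm_infty]
      by_cases hA : A.1 1 0 = 0
      · rw [if_pos hA, if_pos (by rw [mul_entry, hA, hB]; ring)]
      · rw [if_neg hA]
        have hABne : (A*B).1 1 0 ≠ 0 := by
          rw [mul_entry, hB]; simpa using mul_ne_zero hA hB00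
        rw [if_neg hABne]
        congr 1
        rw [mul_entry, mul_entry, hB]
        field_simp
        ring
    · rw [if_neg hB, bm_coe]
      set r := B.1 0 0 / B.1 1 0 with hr
      have key : A.1 1 0 * r + A.1 1 1 = ((A*B).1 1 0) / B.1 1 0 := by
        rw [mul_entry, hr]; field_simp; try ring
      by_cases hAB : (A*B).1 1 0 = 0
      · rw [if_pos hAB, if_pos (by rw [key, hAB, zero_div])]
      · rw [if_neg hAB, if_neg (by rw [key]; exact div_ne_zero hAB hB)]
        congr 1
        rw [key, mul_entry, mul_entry, hr]
        field_simp
        try ring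
  | coe r =>
    rw [bm_coe, bm_coe]
    set u := B.1 1 0 * r + B.1 1 1 with hu
    set v := B.1 0 0 * r + B.1 0 1 with hv
    have habden : (A*B).1 1 0 * r + (A*B).1 1 1 = A.1 1 0 * v + A.1 1 1 * u := by
      rw [mul_entry, mul_entry, hu, hv]; ring
    have habnum : (A*B).1 0 0 * r + (A*B).1 0 1 = A.1 0 0 * v + A.1 0 1 * u := by
      rw [mul_entry, mul_entry, hu, hv]; ring
    by_cases hB : u = 0
    · have hvne : v ≠ 0 := by
        intro h0
        rw [hu] at hB; rw [hv] at h0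
        have h1 : B.1 0 1 = -(B.1 0 0 * r) := by linarith
        have h2 : B.1 1 1 = -(B.1 1 0 * r) := by linarith
        rw [h1, h2] at hdB
        nlinarith
      rw [if_pos hB, bm_infty]
      by_cases hA : A.1 1 0 = 0
      · rw [if_pos hA, if_pos (by rw [habden, hA, hB]; ring)]
      · rw [if_neg hA, if_neg (by rw [habden, hB]; simpa using mul_ne_zero hA hvne)]
        congr 1
        rw [habnum, habden, hB]
        field_simp
        try ring
    · rw [if_neg hB, bm_coe]
      set w := v / u with hw
      have key : A.1 1 0 * w + A.1 1 1 = ((A*B).1 1 0 * r + (A*B).1 1 1) / u := by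
        rw [habden, hw]; field_simp
      by_cases hAB : (A*B).1 1 0 * r + (A*B).1 1 1 = 0
      · rw [if_pos hAB, if_pos (by rw [key, hAB, zero_div])]
      · rw [if_neg hAB, if_neg (by rw [key]; exact div_ne_zero hAB hB)]
        congr 1
        rw [key, habnum, habden, hw]
        field_simp
        try ring

lemma four_prod (a b a' c d c' : ℝ) (haa' : a*a'=1) (hcc' : c*c'=1) :
    !![c,d;0,c'] * !![a,b;0,a'] * !![c',-d;0,c] * !![a',-b;0,a]
      = !![1, a*c*(b*(c-c') - d*(a-a')); 0, 1] := by
  ext i j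
  fin_cases i <;> fin_cases j <;> simp [Matrix.mul_apply, Fin.sum_univ_two] <;>
    first
      | ring1
      | linear_combination (c*c')*haa' + hcc'

lemma three_prod (a b a' t : ℝ) (haa' : a*a'=1) :
    !![a,b;0,a'] * !![1,t;0,1] * !![a',-b;0,a] = !![1, a^2*t; 0, 1] := by
  ext i j
  fin_cases i <;> fin_cases j <;> simp [Matrix.mul_apply, Fin.sum_univ_two] <;>
    first
      | ring1
      | linear_combination haa'
      | linear_combination t*haa'

lemma notDiscrete_of_seq (Γ : Subgroup SL(2,ℝ)) (u : ℕ → SL(2,ℝ)) (hu : ∀ n, u n ∈ Γ)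
    (hne : ∀ n, u n ≠ 1)
    (hlim : Filter.Tendsto (fun n => ((u n : SL(2,ℝ)) : Matrix (Fin 2) (Fin 2) ℝ))
      Filter.atTop (nhds 1)) : ¬ DiscreteTopology Γ := by
  intro hd
  have h1 : Filter.Tendsto (fun n => (⟨u n, hu n⟩ : Γ)) Filter.atTop (nhds (1 : Γ)) := by
    rw [nhds_induced (fun γ : Γ => (γ : SL(2,ℝ))), Filter.tendsto_comap_iff]
    rw [nhds_induced (fun A : SL(2,ℝ) => (A : Matrix (Fin 2) (Fin 2) ℝ)),
      Filter.tendsto_comap_iff]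
    exact hlim
  rw [nhds_discrete, Filter.tendsto_pure] at h1
  obtain ⟨n, hn⟩ := h1.exists
  exact hne n (by simpa using congrArg Subtype.val hn)

lemma key (Γ : Subgroup SL(2,ℝ)) (g h M : SL(2,ℝ)) (hg : g ∈ Γ) (hh : h ∈ Γ)
    (hg0 : (M*g*M⁻¹).1 1 0 = 0) (hh0 : (M*h*M⁻¹).1 1 0 = 0)
    (ha : ((M*g*M⁻¹).1 0 0)^2 < 1)
    (hD : (M*g*M⁻¹).1 0 1 * ((M*h*M⁻¹).1 0 0 - (M*h*M⁻¹).1 1 1)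
        - (M*h*M⁻¹).1 0 1 * ((M*g*M⁻¹).1 0 0 - (M*g*M⁻¹).1 1 1) ≠ 0) :
    ¬ DiscreteTopology Γ := by
  set G := M*g*M⁻¹ with hGdef
  set H := M*h*M⁻¹ with hHdef
  set a := G.1 0 0 with hadef
  set b := G.1 0 1 with hbdef
  set a' := G.1 1 1 with ha'def
  set c := H.1 0 0 with hcdef
  set d := H.1 0 1 with hddef
  set c' := H.1 1 1 with hc'def
  have haa' : a * a' = 1 := by have := sl_det G; rw [hg0] at this; linarith
  have hcc' : c * c' = 1 := by have := sl_det H; rw [hh0] at this; linarith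
  have hane : a ≠ 0 := left_ne_zero_of_mul_eq_one haa'
  have hcne : c ≠ 0 := left_ne_zero_of_mul_eq_one hcc'
  have hG : G.1 = !![a, b; 0, a'] := by
    ext i j
    fin_cases i <;> fin_cases j <;> simp [hadef, hbdef, ha'def, hg0]
  have hH : H.1 = !![c, d; 0, c'] := by
    ext i j
    fin_cases i <;> fin_cases j <;> simp [hcdef, hddef, hc'def, hh0]
  have hGinv : (G⁻¹).1 = !![a', -b; 0, a] := by
    rw [inv_entries, hg0]; norm_num; exact ⟨⟨rfl, rfl⟩, rfl⟩
  have hHinv : (H⁻¹).1 = !![c', -d; 0, c] := by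
    rw [inv_entries, hh0]; norm_num; exact ⟨⟨rfl, rfl⟩, rfl⟩
  set τ : ℝ := a*c*(b*(c - c') - d*(a - a')) with hτdef
  have hτ : τ ≠ 0 := mul_ne_zero (mul_ne_zero hane hcne) hD
  set C := H * G * H⁻¹ * G⁻¹ with hCdef
  have hC : C.1 = !![1, τ; 0, 1] := by
    have h1 : C.1 = H.1 * G.1 * (H⁻¹).1 * (G⁻¹).1 := by simp [hCdef]
    rw [h1, hG, hH, hGinv, hHinv, four_prod a b a' c d c' haa' hcc']
  have hpow : ∀ n : ℕ, ((G^n) * C * (G^n)⁻¹).1 = !![1, τ*(a^2)^n; 0, 1] := by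
    intro n
    induction n with
    | zero => simpa using hC
    | succ n ih =>
      have hgrp : (G^(n+1)) * C * (G^(n+1))⁻¹ = G * ((G^n) * C * (G^n)⁻¹) * G⁻¹ := by
        rw [pow_succ']
        group
      rw [hgrp]
      have h2 : (G * ((G^n) * C * (G^n)⁻¹) * G⁻¹).1
          = G.1 * ((G^n) * C * (G^n)⁻¹).1 * (G⁻¹).1 := by simp
      rw [h2, ih, hG, hGinv, three_prod a b a' (τ*(a^2)^n) haa']
      congr 1
      rw [pow_succ]
      ring
  set w : SL(2,ℝ) := h*g*h⁻¹*g⁻¹ with hwdef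
  have hCw : C = M * w * M⁻¹ := by
    rw [hCdef, hwdef, hGdef, hHdef]; group
  set u : ℕ → SL(2,ℝ) := fun n => g^n * w * (g^n)⁻¹ with hudef
  have hu : ∀ n, u n ∈ Γ := fun n =>
    Γ.mul_mem (Γ.mul_mem (Γ.pow_mem hg n) (Γ.mul_mem (Γ.mul_mem (Γ.mul_mem hh hg)
      (Γ.inv_mem hh)) (Γ.inv_mem hg))) (Γ.inv_mem (Γ.pow_mem hg n))
  have hun : ∀ n, (u n).1 = (M⁻¹).1 * !![1, τ*(a^2)^n; 0, 1] * M.1 := by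
    intro n
    have hconj : ∀ m : ℕ, (M*g*M⁻¹)^m = M * g^m * M⁻¹ := by
      intro m
      induction m with
      | zero => simp
      | succ m ih => rw [pow_succ, pow_succ, ih]; group
    have hgrp : u n = M⁻¹ * ((G^n) * C * (G^n)⁻¹) * M := by
      rw [hudef, hCw, hGdef]
      simp only [hconj]
      group
    rw [hgrp]
    have h3 : (M⁻¹ * ((G^n) * C * (G^n)⁻¹) * M).1
        = (M⁻¹).1 * ((G^n) * C * (G^n)⁻¹).1 * M.1 := by simp
    rw [h3, hpow n]
  have hne : ∀ n, u n ≠ 1 := by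
    intro n hun1
    have hw1 : w = 1 := by
      have h4 := congrArg (fun z => (g^n)⁻¹ * z * (g^n)) hun1
      simp only [hudef] at h4
      group at h4
      simpa using h4
    have hC1 : C = 1 := by rw [hCw, hw1]; group
    have h5 : (!![1, τ; 0, 1] : Matrix (Fin 2) (Fin 2) ℝ) 0 1
        = (1 : Matrix (Fin 2) (Fin 2) ℝ) 0 1 := by
      rw [← hC, hC1]
      simp
    simp [Matrix.one_apply] at h5
    exact hτ h5
  apply notDiscrete_of_seq Γ u hu hne
  have hE : ∀ n, ((u n : SL(2,ℝ)) : Matrix (Fin 2) (Fin 2) ℝ)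
      = 1 + (τ*(a^2)^n) • ((M⁻¹).1 * !![(0:ℝ), 1; 0, 0] * M.1) := by
    intro n
    rw [hun n]
    have h6 : !![(1:ℝ), τ*(a^2)^n; 0, 1] = 1 + (τ*(a^2)^n) • !![(0:ℝ), 1; 0, 0] := by
      ext i j
      fin_cases i <;> fin_cases j <;> simp [Matrix.one_apply]
    rw [h6, Matrix.mul_add, Matrix.add_mul, Matrix.mul_smul, Matrix.smul_mul]
    congr 1
    rw [mul_one, coe_inv_coe]
  simp only [hE]
  have hs0 : Filter.Tendsto (fun n : ℕ => τ*(a^2)^n) Filter.atTop (nhds 0) := by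
    rw [show (0:ℝ) = τ * 0 by ring]
    apply Filter.Tendsto.const_mul
    apply tendsto_pow_atTop_nhds_zero_of_lt_one (by positivity) ha
  have h8 := (hs0.smul_const ((M⁻¹).1 * !![(0:ℝ), 1; 0, 0] * M.1)).const_add
    (1 : Matrix (Fin 2) (Fin 2) ℝ)
  simpa using h8

/-- If two hyperbolic elements `g, h` of a subgroup `Γ ≤ SL(2, ℝ)`
share exactly one fixed point on `∂ℍ`, then `Γ` is not discrete.  (Equivalently, in a
discrete subgroup of `PSL(2, ℝ)` two hyperbolic elements share both fixed points or
none.) -/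
theorem not_discrete_of_shared_fixed_point (Γ : Subgroup SL(2, ℝ)) (g h : SL(2, ℝ))
    (hg : g ∈ Γ) (hh : h ∈ Γ)
    (hgh : 2 < |g.1 0 0 + g.1 1 1|) (hhh : 2 < |h.1 0 0 + h.1 1 1|)
    (hshare : ∃ x : OnePoint ℝ, boundaryFix g ∩ boundaryFix h = {x}) :
    ¬ DiscreteTopology Γ := by
  obtain ⟨x, hx⟩ := hshare
  have hxmem : x ∈ boundaryFix g ∩ boundaryFix h := by rw [hx]; rfl
  have hfixg : boundaryMoebius g x = x := hxmem.1
  have hfixh : boundaryMoebius h x = x := hxmem.2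
  obtain ⟨M, hMg0, hMh0, hMx⟩ : ∃ M : SL(2,ℝ),
      (M*g*M⁻¹).1 1 0 = 0 ∧ (M*h*M⁻¹).1 1 0 = 0 ∧ boundaryMoebius M x = ∞ := by
    cases x with
    | infty =>
      refine ⟨1, ?_, ?_, ?_⟩
      · rw [bm_infty] at hfixg
        by_cases hc : g.1 1 0 = 0
        · simpa using hc
        · rw [if_neg hc] at hfixg; exact absurd hfixg (OnePoint.coe_ne_infty _)
      · rw [bm_infty] at hfixh
        by_cases hc : h.1 1 0 = 0
        · simpa using hc
        · rw [if_neg hc] at hfixh; exact absurd hfixh (OnePoint.coe_ne_infty _)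
      · rw [bm_infty]
        simp
    | coe r =>
      refine ⟨⟨!![0,-1;1,-r], by simp [Matrix.det_fin_two_of]⟩, ?_, ?_, ?_⟩
      · exact conj_lower_left g r hfixg _ rfl
      · exact conj_lower_left h r hfixh _ rfl
      · refine (bm_coe _ r).trans (if_pos ?_)
        show (!![0,-1;1,-r] : Matrix (Fin 2) (Fin 2) ℝ) 1 0 * r
          + (!![0,-1;1,-r] : Matrix (Fin 2) (Fin 2) ℝ) 1 1 = 0
        norm_num
  have hdg := sl_det (M*g*M⁻¹)
  have hdh := sl_det (M*h*M⁻¹)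
  rw [hMg0] at hdg
  rw [hMh0] at hdh
  have haa' : (M*g*M⁻¹).1 0 0 * (M*g*M⁻¹).1 1 1 = 1 := by linarith
  have hcc' : (M*h*M⁻¹).1 0 0 * (M*h*M⁻¹).1 1 1 = 1 := by linarith
  have htrg : 2 < |(M*g*M⁻¹).1 0 0 + (M*g*M⁻¹).1 1 1| := by
    rw [conj_trace M g]; exact hgh
  have htrh : 2 < |(M*h*M⁻¹).1 0 0 + (M*h*M⁻¹).1 1 1| := by
    rw [conj_trace M h]; exact hhh
  have ha2 : ((M*g*M⁻¹).1 0 0)^2 ≠ 1 := sq_ne_one _ _ haa' htrg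
  have hc2 : ((M*h*M⁻¹).1 0 0)^2 ≠ 1 := sq_ne_one _ _ hcc' htrh
  have ha'ne : (M*g*M⁻¹).1 1 1 ≠ 0 := right_ne_zero_of_mul_eq_one haa'
  have hc'ne : (M*h*M⁻¹).1 1 1 ≠ 0 := right_ne_zero_of_mul_eq_one hcc'
  have hasub : (M*g*M⁻¹).1 1 1 - (M*g*M⁻¹).1 0 0 ≠ 0 := by
    intro h0
    apply ha2
    linear_combination haa' - (M*g*M⁻¹).1 0 0 * h0
  have hcsub : (M*h*M⁻¹).1 1 1 - (M*h*M⁻¹).1 0 0 ≠ 0 := by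
    intro h0
    apply hc2
    linear_combination hcc' - (M*h*M⁻¹).1 0 0 * h0
  have hD0 : (M*g*M⁻¹).1 0 1 * ((M*h*M⁻¹).1 0 0 - (M*h*M⁻¹).1 1 1)
      - (M*h*M⁻¹).1 0 1 * ((M*g*M⁻¹).1 0 0 - (M*g*M⁻¹).1 1 1) ≠ 0 := by
    intro heq
    set y : ℝ := (M*g*M⁻¹).1 0 1 / ((M*g*M⁻¹).1 1 1 - (M*g*M⁻¹).1 0 0) with hydef
    have hyd : y = (M*h*M⁻¹).1 0 1 / ((M*h*M⁻¹).1 1 1 - (M*h*M⁻¹).1 0 0) := by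
      rw [hydef, div_eq_div_iff hasub hcsub]
      linear_combination -heq
    have hyprodG : y * ((M*g*M⁻¹).1 1 1 - (M*g*M⁻¹).1 0 0) = (M*g*M⁻¹).1 0 1 := by
      rw [hydef]
      exact div_mul_cancel₀ _ hasub
    have hyprodH : y * ((M*h*M⁻¹).1 1 1 - (M*h*M⁻¹).1 0 0) = (M*h*M⁻¹).1 0 1 := by
      rw [hyd]
      exact div_mul_cancel₀ _ hcsub
    have hyG : boundaryMoebius (M*g*M⁻¹) (y : OnePoint ℝ) = (y : OnePoint ℝ) := by
      rw [bm_coe, hMg0, if_neg (by simpa using ha'ne), OnePoint.coe_eq_coe,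
        div_eq_iff (by simpa using ha'ne)]
      linear_combination -hyprodG
    have hyH : boundaryMoebius (M*h*M⁻¹) (y : OnePoint ℝ) = (y : OnePoint ℝ) := by
      rw [bm_coe, hMh0, if_neg (by simpa using hc'ne), OnePoint.coe_eq_coe,
        div_eq_iff (by simpa using hc'ne)]
      linear_combination -hyprodH
    have hMinvy : boundaryMoebius M (boundaryMoebius M⁻¹ (y : OnePoint ℝ))
        = (y : OnePoint ℝ) := by
      rw [← boundaryMoebius_mul, mul_inv_cancel, boundaryMoebius_one]
      rfl
    have hgx' : boundaryMoebius g (boundaryMoebius M⁻¹ (y:OnePoint ℝ))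
        = boundaryMoebius M⁻¹ (y:OnePoint ℝ) := by
      conv_lhs => rw [show g = M⁻¹ * (M*g*M⁻¹ * M) by group]
      rw [boundaryMoebius_mul, boundaryMoebius_mul, hMinvy, hyG]
    have hhx' : boundaryMoebius h (boundaryMoebius M⁻¹ (y:OnePoint ℝ))
        = boundaryMoebius M⁻¹ (y:OnePoint ℝ) := by
      conv_lhs => rw [show h = M⁻¹ * (M*h*M⁻¹ * M) by group]
      rw [boundaryMoebius_mul, boundaryMoebius_mul, hMinvy, hyH]
    have hx'mem : boundaryMoebius M⁻¹ (y:OnePoint ℝ)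
        ∈ boundaryFix g ∩ boundaryFix h := ⟨hgx', hhx'⟩
    rw [hx] at hx'mem
    have hxeq : boundaryMoebius M⁻¹ (y:OnePoint ℝ) = x := hx'mem
    rw [hxeq, hMx] at hMinvy
    exact OnePoint.coe_ne_infty y hMinvy.symm
  rcases ha2.lt_or_gt with hlt | hgt
  · exact key Γ g h M hg hh hMg0 hMh0 hlt hD0
  · have hconjinv : M*g⁻¹*M⁻¹ = (M*g*M⁻¹)⁻¹ := by group
    apply key Γ g⁻¹ h M (Γ.inv_mem hg) hh ?_ hMh0 ?_ ?_
    · rw [hconjinv, inv_entries]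
      simp [hMg0]
    · rw [hconjinv, inv_entries]
      have h9 : ((M*g*M⁻¹).1 1 1)^2 * ((M*g*M⁻¹).1 0 0)^2 = 1 := by
        linear_combination ((M*g*M⁻¹).1 0 0 * (M*g*M⁻¹).1 1 1 + 1) * haa'
      show ((M*g*M⁻¹).1 1 1)^2 < 1
      nlinarith [h9, hgt, sq_nonneg ((M*g*M⁻¹).1 1 1)]
    · rw [hconjinv, inv_entries]
      simp
      intro h0
      apply hD0
      linear_combination -h0
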